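/- Let X be a compact Hausdorff space and P a monic polynomial of degree n over C(X). For every δ > 0 there exists ε > 0 such that every ε-approximate root f ∈ C(X) of P satisfies d(f(x), σ_{P(x,·)}) < δ for all x ∈ X, where σ_{P(x,·)} is the set of roots of the complex polynomial P(x,z) and d denotes the minimum distance from a point to this finite set. -/

import Mathlib

private lemma prod_ge_pow_card (δ : ℝ) (hδ : 0 ≤ δ) :
    ∀ (s : Multiset ℝ), (∀ r ∈ s, δ ≤ r) → δ ^ Multiset.card s ≤ s.prod := by
  intro s
  induction s using Multiset.induction with
  | empty => simp
  | cons a s ih =>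
    intro h
    simp only [Multiset.card_cons, Multiset.prod_cons, pow_succ']
    have ha : δ ≤ a := h a (Multiset.mem_cons_self a s)
    have hs : δ ^ Multiset.card s ≤ s.prod := ih fun r hr => h r (Multiset.mem_cons_of_mem hr)
    exact mul_le_mul ha hs (pow_nonneg hδ _) (le_trans hδ ha)

/-- Approximate roots are uniformly close to the roots: for a monic polynomial
`P(x,z) = z^n + ∑ aᵢ(x) zⁱ` over `C(X)` and every `δ > 0` there is `ε > 0` such
that every `ε`-approximate root `f` satisfies `d(f(x), σ_{P(x,·)}) < δ` for all
`x`, i.e. `f(x)` is within `δ` of some root of `P(x,·)`. -/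
theorem stmt3 {X : Type*} [TopologicalSpace X] [CompactSpace X] [T2Space X]
    (n : ℕ) (hn : 0 < n) (a : Fin n → C(X, ℂ)) (δ : ℝ) (hδ : 0 < δ) :
    ∃ ε > 0, ∀ f : C(X, ℂ),
      (∀ x : X, ‖(f x) ^ n + ∑ i : Fin n, a i x * (f x) ^ (i : ℕ)‖ < ε) →
      ∀ x : X, ∃ z : ℂ,
        z ^ n + ∑ i : Fin n, a i x * z ^ (i : ℕ) = 0 ∧ ‖f x - z‖ < δ := by
  refine ⟨δ ^ n, pow_pos hδ n, fun f hf x => ?_⟩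
  set w := f x with hw
  set q : Polynomial ℂ :=
    Polynomial.X ^ n + ∑ i : Fin n, Polynomial.C (a i x) * Polynomial.X ^ (i : ℕ) with hq
  have hdeg_sum : (∑ i : Fin n, Polynomial.C (a i x) * Polynomial.X ^ (i : ℕ)).degree < (n : WithBot ℕ) := by
    refine lt_of_le_of_lt (Polynomial.degree_sum_le _ _) ?_
    rw [Finset.sup_lt_iff (by exact_mod_cast WithBot.bot_lt_coe n)]
    intro i _
    exact lt_of_le_of_lt (Polynomial.degree_C_mul_X_pow_le _ _) (by exact_mod_cast i.2)
  have hmonic : q.Monic := by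
    have hx : (Polynomial.X ^ n : Polynomial ℂ).Monic := Polynomial.monic_X_pow n
    exact hx.add_of_left (by rw [Polynomial.degree_X_pow]; exact hdeg_sum)
  have hdq : q.degree = n := by
    rw [hq, Polynomial.degree_add_eq_left_of_degree_lt
      (by rw [Polynomial.degree_X_pow]; exact hdeg_sum), Polynomial.degree_X_pow]
  have hnd : q.natDegree = n := Polynomial.natDegree_eq_of_degree_eq_some hdq
  have hsplits : Polynomial.Splits q := IsAlgClosed.splits q
  have hcard : Multiset.card q.roots = n := by
    rw [← hnd]; exact (Polynomial.splits_iff_card_roots.mp hsplits)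
  have hfact : q = (q.roots.map fun z => Polynomial.X - Polynomial.C z).prod :=
    hsplits.eq_prod_roots_of_monic hmonic
  have heval : q.eval w = (q.roots.map fun z => w - z).prod := by
    conv_lhs => rw [hfact]
    rw [Polynomial.eval_multiset_prod, Multiset.map_map]
    simp
  have hevq : ∀ z : ℂ, q.eval z = z ^ n + ∑ i : Fin n, a i x * z ^ (i : ℕ) := by
    intro z
    simp [hq, Polynomial.eval_finset_sum]
  have habs : ‖q.eval w‖ = (q.roots.map fun z => ‖w - z‖).prod := by
    rw [heval]
    have := map_multiset_prod (normHom : ℂ →*₀ ℝ) (q.roots.map fun z => w - z)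
    rw [Multiset.map_map] at this
    exact this
  have hlt : ‖q.eval w‖ < δ ^ n := by
    rw [hevq]
    exact hf x
  by_contra h
  push_neg at h
  have hall : ∀ r ∈ q.roots.map (fun z => ‖w - z‖), δ ≤ r := by
    intro r hr
    obtain ⟨z, hz, rfl⟩ := Multiset.mem_map.mp hr
    have hz0 : q.eval z = 0 := Polynomial.isRoot_of_mem_roots hz
    rw [hevq] at hz0
    exact h z hz0
  have hge : δ ^ n ≤ (q.roots.map fun z => ‖w - z‖).prod := by
    have := prod_ge_pow_card δ hδ.le _ hall
    rwa [Multiset.card_map, hcard] at this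
  rw [habs] at hlt
  linarith
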